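/- arXiv:2008.10111 — 2 statements merged into one kernel-verified Lean document; each statement's English description precedes it below -/
import Mathlib

section
/- Let X ⊆ ℝ⁴ be a convex set and y ∈ X. If v₀ and v₁ both lie in the Reeb cone at y, i.e. vⱼ ∈ T_y⁺X and −i·vⱼ ∈ N_y⁺X for j = 0, 1, then ω₀(v₀, v₁) = 0. (This claim is established in the proof of Lemma 3.8 of the paper.) -/
open RealInnerProductSpace

/-- The standard complex structure on ℝ⁴:
`i(x₁,x₂,y₁,y₂) = (−y₁,−y₂,x₁,x₂)`. -/
def Imap (v : EuclideanSpace ℝ (Fin 4)) : EuclideanSpace ℝ (Fin 4) :=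
  WithLp.toLp 2 ![-(v 2), -(v 3), v 0, v 1]

/-- The standard symplectic form on ℝ⁴: `ω₀(u,v) = ⟪i·u, v⟫`. -/
noncomputable def omega0 (u v : EuclideanSpace ℝ (Fin 4)) : ℝ := ⟪Imap u, v⟫

/-- The tangent cone `T_y⁺X`. -/
def tangentConePlus (X : Set (EuclideanSpace ℝ (Fin 4)))
    (y : EuclideanSpace ℝ (Fin 4)) : Set (EuclideanSpace ℝ (Fin 4)) :=
  closure {v | ∃ ε : ℝ, 0 < ε ∧ y + ε • v ∈ X}

/-- The positive normal cone `N_y⁺X`. -/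
def normalConePlus (X : Set (EuclideanSpace ℝ (Fin 4)))
    (y : EuclideanSpace ℝ (Fin 4)) : Set (EuclideanSpace ℝ (Fin 4)) :=
  {v | ∀ x ∈ X, ⟪x - y, v⟫ ≤ 0}


lemma aux_antisym (u v : EuclideanSpace ℝ (Fin 4)) :
    ⟪Imap u, v⟫ = -⟪Imap v, u⟫ := by
  simp [Imap, PiLp.inner_apply, Fin.sum_univ_four]
  ring

lemma aux_nonneg (X : Set (EuclideanSpace ℝ (Fin 4))) (y v w : EuclideanSpace ℝ (Fin 4))
    (hv : v ∈ tangentConePlus X y) (hw : -(Imap w) ∈ normalConePlus X y) :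
    0 ≤ ⟪Imap w, v⟫ := by
  have hclosed : IsClosed {u : EuclideanSpace ℝ (Fin 4) | 0 ≤ ⟪Imap w, u⟫} :=
    isClosed_le continuous_const (Continuous.inner continuous_const continuous_id)
  have hsub : {u : EuclideanSpace ℝ (Fin 4) | ∃ ε : ℝ, 0 < ε ∧ y + ε • u ∈ X} ⊆
      {u : EuclideanSpace ℝ (Fin 4) | 0 ≤ ⟪Imap w, u⟫} := by
    rintro u ⟨ε, hε, hx⟩
    have := hw _ hx
    simp only [add_sub_cancel_left, inner_neg_right, real_inner_smul_left] at this
    have h2 : 0 ≤ ε * ⟪u, Imap w⟫ := by linarith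
    have := nonneg_of_mul_nonneg_right h2 hε
    rwa [real_inner_comm] at this
  exact closure_minimal hsub hclosed hv

/-- (From the proof of Lemma 3.8.) If `X ⊆ ℝ⁴` is convex and `y ∈ X`, then any two
vectors `v₀, v₁` of the Reeb cone at `y` (i.e. `vⱼ ∈ T_y⁺X` and `−i·vⱼ ∈ N_y⁺X`)
satisfy `ω₀(v₀, v₁) = 0`. -/
theorem omega0_eq_zero_of_mem_reebCone
    (X : Set (EuclideanSpace ℝ (Fin 4))) (hX : Convex ℝ X)
    (y : EuclideanSpace ℝ (Fin 4)) (hy : y ∈ X)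
    (v₀ v₁ : EuclideanSpace ℝ (Fin 4))
    (hv₀T : v₀ ∈ tangentConePlus X y) (hv₀N : -(Imap v₀) ∈ normalConePlus X y)
    (hv₁T : v₁ ∈ tangentConePlus X y) (hv₁N : -(Imap v₁) ∈ normalConePlus X y) :
    omega0 v₀ v₁ = 0 := by
  have h1 := aux_nonneg X y v₁ v₀ hv₁T hv₀N
  have h2 := aux_nonneg X y v₀ v₁ hv₀T hv₁N
  have h3 := aux_antisym v₀ v₁
  unfold omega0
  linarith
end

section
/- Let X ⊆ ℝ⁴ be a convex polytope, let y ∈ frontier X, and let L_y = T_y⁺X ∩ (−T_y⁺X) (the direction space of the open face of ∂X containing y). Assume L_y is a 2-dimensional subspace. If there exists w ≠ 0 with w ∈ L_y and −i·w ∈ N_y⁺X, then ω₀ vanishes identically on L_y, i.e. the 2-face of X through y is Lagrangian. (Lemma 3.10 of the paper: if TF ∩ R_F⁺X ≠ {0} for a 2-face F, then F is Lagrangian.) -/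
open RealInnerProductSpace

lemma omega0_eq (u v : EuclideanSpace ℝ (Fin 4)) :
    omega0 u v = u 0 * v 2 + u 1 * v 3 - u 2 * v 0 - u 3 * v 1 := by
  simp [omega0, Imap, PiLp.inner_apply, Fin.sum_univ_four, RCLike.inner_apply,
    Matrix.cons_val_zero, Matrix.cons_val_one, Matrix.head_cons]
  ring

lemma omega0_skew (u v : EuclideanSpace ℝ (Fin 4)) : omega0 u v = -omega0 v u := by
  simp [omega0_eq]; ring

lemma omega0_smul_left (a : ℝ) (u v : EuclideanSpace ℝ (Fin 4)) :
    omega0 (a • u) v = a * omega0 u v := by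
  simp [omega0_eq, PiLp.smul_apply, smul_eq_mul]; ring

lemma omega0_smul_right (a : ℝ) (u v : EuclideanSpace ℝ (Fin 4)) :
    omega0 u (a • v) = a * omega0 u v := by
  simp [omega0_eq, PiLp.smul_apply, smul_eq_mul]; ring

lemma omega0_add_right (u v v' : EuclideanSpace ℝ (Fin 4)) :
    omega0 u (v + v') = omega0 u v + omega0 u v' := by
  simp [omega0_eq, PiLp.add_apply]; ring

/-- Duality between the tangent and normal cones. -/
lemma inner_nonpos_of_mem_cones {X : Set (EuclideanSpace ℝ (Fin 4))}
    {y v m : EuclideanSpace ℝ (Fin 4)} (hv : v ∈ tangentConePlus X y)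
    (hm : m ∈ normalConePlus X y) : ⟪v, m⟫ ≤ 0 := by
  have hclosed : IsClosed {v : EuclideanSpace ℝ (Fin 4) | ⟪v, m⟫ ≤ 0} :=
    isClosed_le (continuous_id.inner continuous_const) continuous_const
  have hsub : {v : EuclideanSpace ℝ (Fin 4) | ∃ ε : ℝ, 0 < ε ∧ y + ε • v ∈ X} ⊆
      {v | ⟪v, m⟫ ≤ 0} := by
    rintro v ⟨ε, hε, hx⟩
    simp only [Set.mem_setOf_eq]
    have h := hm _ hx
    have h2 : y + ε • v - y = ε • v := by abel
    rw [h2, real_inner_smul_left] at h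
    by_contra hpos
    push_neg at hpos
    exact absurd h (not_le.mpr (mul_pos hε hpos))
  exact closure_minimal hsub hclosed hv

/-- Lemma 3.10: let `X ⊆ ℝ⁴` be a convex polytope, `y ∈ frontier X`, and suppose
`L_y = T_y⁺X ∩ (−T_y⁺X)` is a 2-dimensional subspace.  If some nonzero `w ∈ L_y`
satisfies `−i·w ∈ N_y⁺X`, then `ω₀` vanishes identically on `L_y`, i.e. the
2-face of `X` through `y` is Lagrangian. -/
theorem lagrangian_of_tangent_reeb {N : ℕ}
    (n : Fin N → EuclideanSpace ℝ (Fin 4)) (c : Fin N → ℝ)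
    (hn : ∀ i, n i ≠ 0)
    (X : Set (EuclideanSpace ℝ (Fin 4)))
    (hX : X = ⋂ i, {x | ⟪x, n i⟫ ≤ c i})
    (hcomp : IsCompact X)
    (y : EuclideanSpace ℝ (Fin 4)) (hy : y ∈ frontier X)
    (L : Submodule ℝ (EuclideanSpace ℝ (Fin 4)))
    (hL : (L : Set (EuclideanSpace ℝ (Fin 4))) =
      tangentConePlus X y ∩ -(tangentConePlus X y))
    (hdim : Module.finrank ℝ L = 2)
    (w : EuclideanSpace ℝ (Fin 4)) (hw0 : w ≠ 0)
    (hwL : w ∈ L) (hwN : -(Imap w) ∈ normalConePlus X y) :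
    ∀ u ∈ L, ∀ v ∈ L, omega0 u v = 0 := by
  -- Step 1: omega0 w x = 0 for all x ∈ L
  have key : ∀ x ∈ L, omega0 w x = 0 := by
    intro x hx
    have hx' : x ∈ tangentConePlus X y ∩ -(tangentConePlus X y) := by
      rw [← hL]; exact hx
    have hx1 : x ∈ tangentConePlus X y := hx'.1
    have hx2 : -x ∈ tangentConePlus X y := hx'.2
    have h1 : ⟪x, -(Imap w)⟫ ≤ 0 := inner_nonpos_of_mem_cones hx1 hwN
    have h2 : ⟪-x, -(Imap w)⟫ ≤ 0 := inner_nonpos_of_mem_cones hx2 hwN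
    rw [inner_neg_left] at h2
    have h3 : ⟪x, -(Imap w)⟫ = 0 := le_antisymm h1 (by linarith)
    rw [inner_neg_right] at h3
    have h4 : ⟪x, Imap w⟫ = 0 := by linarith
    rw [omega0, real_inner_comm]
    exact h4
  intro u hu v hv
  -- Step 2: w, u, v are linearly dependent in L
  set w' : L := ⟨w, hwL⟩
  set u' : L := ⟨u, hu⟩
  set v' : L := ⟨v, hv⟩
  have hnotli : ¬ LinearIndependent ℝ ![w', u', v'] := by
    intro h
    have := h.fintype_card_le_finrank
    simp [hdim] at this
  rw [Fintype.not_linearIndependent_iff] at hnotli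
  obtain ⟨g, hg, i, hgi⟩ := hnotli
  have hsum : g 0 • w' + g 1 • u' + g 2 • v' = 0 := by
    have := hg
    rwa [Fin.sum_univ_three] at this
  have hsum' : g 0 • w + g 1 • u + g 2 • v = 0 := by
    have := congrArg (Subtype.val) hsum
    simpa using this
  -- Step 3: case analysis
  by_cases hc : g 2 ≠ 0
  · have hveq : g 2 • v = -(g 0 • w) - g 1 • u := by
      have h := eq_neg_of_add_eq_zero_right hsum'
      rw [h]; abel
    have : g 2 * omega0 u v = 0 := by
      rw [← omega0_smul_right, hveq]
      have : -(g 0 • w) - g 1 • u = (-(g 0)) • w + (-(g 1)) • u := by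
        module
      rw [this, omega0_add_right, omega0_smul_right, omega0_smul_right]
      have h1 : omega0 u w = 0 := by rw [omega0_skew, key u hu]; ring
      have h2 : omega0 u u = 0 := by rw [omega0_eq]; ring
      rw [h1, h2]; ring
    exact (mul_eq_zero.mp this).resolve_left hc
  · push_neg at hc
    by_cases hb : g 1 ≠ 0
    · have hueq : g 1 • u = -(g 0 • w) := by
        have h0 : g 0 • w + g 1 • u = 0 := by simpa [hc] using hsum'
        exact eq_neg_of_add_eq_zero_right h0
      have : g 1 * omega0 u v = 0 := by
        rw [← omega0_smul_left, hueq]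
        have : -(g 0 • w) = (-(g 0)) • w := by module
        rw [this, omega0_smul_left, key v hv]; ring
      exact (mul_eq_zero.mp this).resolve_left hb
    · push_neg at hb
      have ha : g 0 ≠ 0 := by
        fin_cases i <;> simp_all
      have : g 0 • w = 0 := by simpa [hb, hc] using hsum'
      exact absurd (smul_eq_zero.mp this) (by simp [ha, hw0])
end
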